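/- Let H be a separable Hilbert space with orthonormal basis {e_α}, and let σ : 𝕋ⁿ × ℤⁿ → L(H) be a symbol such that Σ_{ξ∈ℤⁿ} Σ_α ‖σ(·,ξ)e_α‖_{L^{p₂}(𝕋ⁿ,H)}^s < ∞ for some 0 < s ≤ 1 and 1 ≤ p₁, p₂ < ∞. Then the pseudo-differential operator Af(x) = Σ_ξ e^{2πi x·ξ} σ(x,ξ) f̂(ξ) extends to an s-nuclear operator from L^{p₁}(𝕋ⁿ,H) to L^{p₂}(𝕋ⁿ,H). -/

import Mathlib

open MeasureTheory Filter Topology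
open scoped ENNReal

noncomputable section

instance : Fact ((0:ℝ) < 1) := ⟨zero_lt_one⟩

/-- The `n`-torus `𝕋ⁿ = ℝⁿ/ℤⁿ`. -/
abbrev Torus (n : ℕ) := Fin n → AddCircle (1 : ℝ)

/-- The character `e_ξ(x) = e^{2πi x·ξ}` on the torus. -/
def tChar {n : ℕ} (ξ : Fin n → ℤ) (x : Torus n) : ℂ := ∏ i, fourier (ξ i) (x i)

/-- The vector-valued Fourier coefficient `f̂(ξ) = ∫_{𝕋ⁿ} e^{-2πi x·ξ} f(x) dx`. -/
def vFourierCoeff {n : ℕ} {H : Type*} [NormedAddCommGroup H] [NormedSpace ℂ H]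
    (f : Torus n → H) (ξ : Fin n → ℤ) : H :=
  ∫ x : Torus n, tChar (-ξ) x • f x

/-- `A` is the Fourier multiplier with operator-valued symbol `σ`:
`(Af)^(ξ) = σ(ξ) f̂(ξ)` for all `ξ ∈ ℤⁿ`. -/
def IsFourierMultiplier {n : ℕ} {H : Type*} [NormedAddCommGroup H] [NormedSpace ℂ H]
    (A : Lp H 2 (volume : Measure (Torus n)) →L[ℂ] Lp H 2 (volume : Measure (Torus n)))
    (σ : (Fin n → ℤ) → H →L[ℂ] H) : Prop :=
  ∀ (f : Lp H 2 (volume : Measure (Torus n))) (ξ : Fin n → ℤ),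
    vFourierCoeff (A f) ξ = σ ξ (vFourierCoeff (f : Torus n → H) ξ)

/-- An operator `T : E → F` between Banach spaces is `s`-nuclear, `0 < s ≤ 1`, if
`T = Σ_k ⟨g_k, ·⟩ h_k` with `g_k ∈ E'`, `h_k ∈ F` and `Σ_k ‖g_k‖^s ‖h_k‖^s < ∞`. -/
def IsSNuclear {E F : Type*} [NormedAddCommGroup E] [NormedSpace ℂ E]
    [NormedAddCommGroup F] [NormedSpace ℂ F] (s : ℝ) (T : E →L[ℂ] F) : Prop :=
  ∃ (ι : Type) (_ : Countable ι) (g : ι → (E →L[ℂ] ℂ)) (h : ι → F),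
    Summable (fun k => ‖g k‖ ^ s * ‖h k‖ ^ s) ∧
    ∀ x : E, HasSum (fun k => g k x • h k) (T x)

instance : IsProbabilityMeasure (volume : Measure (AddCircle (1:ℝ))) := by
  rw [AddCircle.volume_eq_smul_haarAddCircle]; simp; infer_instance

instance (n : ℕ) : IsProbabilityMeasure (volume : Measure (Torus n)) :=
  inferInstance

lemma norm_tChar {n : ℕ} (ξ : Fin n → ℤ) (x : Torus n) : ‖tChar ξ x‖ = 1 := by
  rw [tChar, norm_prod]
  refine Finset.prod_eq_one fun i _ => ?_
  rw [fourier_apply, Circle.norm_coe]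

lemma continuous_tChar {n : ℕ} (ξ : Fin n → ℤ) : Continuous (tChar (n := n) ξ) :=
  continuous_finset_prod _ fun i _ => (fourier (ξ i)).continuous.comp (continuous_apply i)

lemma tChar_mul {n : ℕ} (ξ η : Fin n → ℤ) (x : Torus n) :
    tChar ξ x * tChar η x = tChar (ξ + η) x := by
  rw [tChar, tChar, tChar, ← Finset.prod_mul_distrib]
  refine Finset.prod_congr rfl fun i _ => ?_
  rw [Pi.add_apply, fourier_add]

lemma tChar_zero {n : ℕ} (x : Torus n) : tChar 0 x = 1 := by
  rw [tChar]
  exact Finset.prod_eq_one fun i _ => by simp [fourier_zero]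

lemma integral_fourier_addCircle (k : ℤ) :
    ∫ x : AddCircle (1:ℝ), fourier k x = if k = 0 then 1 else 0 := by
  have hvol : (volume : Measure (AddCircle (1:ℝ))) = AddCircle.haarAddCircle := by
    rw [AddCircle.volume_eq_smul_haarAddCircle]; simp
  split_ifs with h
  · subst h
    simp [fourier_zero]
  · rw [hvol]
    exact integral_eq_zero_of_add_right_eq_neg (fourier_add_half_inv_index h one_pos)

lemma integral_tChar {n : ℕ} (ξ : Fin n → ℤ) :
    ∫ x : Torus n, tChar ξ x = if ξ = 0 then 1 else 0 := by
  have : ∫ x : Torus n, tChar ξ x = ∏ i, ∫ x : AddCircle (1:ℝ), fourier (ξ i) x :=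
    MeasureTheory.integral_fintype_prod_eq_prod (ι := Fin n) (fun i t => fourier (ξ i) t)
  rw [this]
  split_ifs with h
  · refine Finset.prod_eq_one fun i _ => ?_
    rw [integral_fourier_addCircle]; simp [h]
  · obtain ⟨i, hi⟩ : ∃ i, ξ i ≠ 0 := by
      by_contra hc
      push_neg at hc
      exact h (funext hc)
    exact Finset.prod_eq_zero (Finset.mem_univ i)
      (by rw [integral_fourier_addCircle, if_neg hi])

section vF

variable {n : ℕ} {H : Type*} [NormedAddCommGroup H] [NormedSpace ℂ H] [CompleteSpace H]

lemma vFourierCoeff_congr {f g : Torus n → H} (h : f =ᵐ[volume] g) (ξ : Fin n → ℤ) :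
    vFourierCoeff f ξ = vFourierCoeff g ξ := by
  refine integral_congr_ae ?_
  filter_upwards [h] with x hx
  rw [hx]

lemma vFourierCoeff_char (ξ₀ ξ : Fin n → ℤ) (v : H) :
    vFourierCoeff (fun x : Torus n => tChar ξ₀ x • v) ξ = if ξ = ξ₀ then v else 0 := by
  have h1 : ∀ x : Torus n, tChar (-ξ) x • tChar ξ₀ x • v = tChar (-ξ + ξ₀) x • v := by
    intro x
    rw [smul_smul, tChar_mul]
  rw [vFourierCoeff]
  simp_rw [h1]
  rw [integral_smul_const, integral_tChar]
  split_ifs with h h'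
  · exact one_smul _ _
  · exact absurd (neg_add_eq_zero.mp h) h'
  · rename_i h'
    exact absurd (by rw [h', neg_add_cancel]) h
  · exact zero_smul _ _

lemma integrable_tChar_smul {f : Torus n → H} (hf : Integrable f volume) (ξ : Fin n → ℤ) :
    Integrable (fun x => tChar ξ x • f x) volume := by
  refine hf.norm.mono' (((continuous_tChar ξ).aestronglyMeasurable).smul hf.1) ?_
  filter_upwards with x
  rw [norm_smul, norm_tChar, one_mul]

lemma vFourierCoeff_add {f g : Torus n → H} (hf : Integrable f volume)
    (hg : Integrable g volume) (ξ : Fin n → ℤ) :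
    vFourierCoeff (f + g) ξ = vFourierCoeff f ξ + vFourierCoeff g ξ := by
  rw [vFourierCoeff, vFourierCoeff, vFourierCoeff, ← integral_add
    (integrable_tChar_smul hf _) (integrable_tChar_smul hg _)]
  congr 1 with x
  rw [Pi.add_apply, smul_add]

lemma vFourierCoeff_smul (c : ℂ) (f : Torus n → H) (ξ : Fin n → ℤ) :
    vFourierCoeff (c • f) ξ = c • vFourierCoeff f ξ := by
  rw [vFourierCoeff, vFourierCoeff, ← integral_smul]
  congr 1 with x
  rw [Pi.smul_apply, smul_comm]

lemma norm_vFourierCoeff_le {p : ℝ≥0∞} [Fact (1 ≤ p)] (hp : p ≠ ⊤)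
    {f : Torus n → H} (hf : MemLp f p volume) (ξ : Fin n → ℤ) :
    ‖vFourierCoeff f ξ‖ ≤ (eLpNorm f p volume).toReal := by
  have h1 : ‖vFourierCoeff f ξ‖ ≤ ∫ x : Torus n, ‖f x‖ := by
    refine (norm_integral_le_integral_norm _).trans (le_of_eq ?_)
    congr 1 with x
    rw [norm_smul, norm_tChar, one_mul]
  refine h1.trans ?_
  have hint : Integrable f volume := hf.integrable Fact.out
  rw [integral_norm_eq_lintegral_enorm hf.1, ← eLpNorm_one_eq_lintegral_enorm]
  exact ENNReal.toReal_mono (hf.eLpNorm_ne_top)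
    (eLpNorm_le_eLpNorm_of_exponent_le Fact.out hf.1)

end vF

lemma summable_of_summable_rpow {ι : Type*} {a : ι → ℝ} {s : ℝ} (hs0 : 0 < s) (hs1 : s ≤ 1)
    (ha : ∀ i, 0 ≤ a i) (h : Summable fun i => a i ^ s) : Summable a := by
  refine Summable.of_norm_bounded_eventually h ?_
  have hcof : ∀ᶠ i in Filter.cofinite, a i ^ s < 1 :=
    h.tendsto_cofinite_zero.eventually_lt_const one_pos
  filter_upwards [hcof] with i hi
  rw [Real.norm_eq_abs, abs_of_nonneg (ha i)]
  rcases eq_or_lt_of_le (ha i) with h0 | h0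
  · rw [← h0]
    exact Real.rpow_nonneg le_rfl s
  · have hle1 : a i ≤ 1 := by
      by_contra hgt
      push_neg at hgt
      exact absurd (Real.one_le_rpow hgt.le hs0.le) (not_le.mpr hi)
    calc a i = a i ^ (1:ℝ) := (Real.rpow_one _).symm
    _ ≤ a i ^ s := Real.rpow_le_rpow_of_exponent_ge h0 hle1 hs1

section lpsum

variable {α : Type*} [MeasurableSpace α] {μ : Measure α} {E : Type*} [NormedAddCommGroup E]
  {p : ℝ≥0∞} [Fact (1 ≤ p)]

lemma Lp.coeFn_finset_sum {ι : Type*} (s : Finset ι) (f : ι → Lp E p μ) :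
    ⇑(∑ i ∈ s, f i) =ᵐ[μ] fun x => ∑ i ∈ s, (f i : α → E) x := by
  induction s using Finset.cons_induction with
  | empty => simp only [Finset.sum_empty]; exact Lp.coeFn_zero E p μ
  | cons a s ha ih =>
      rw [Finset.sum_cons]
      refine (Lp.coeFn_add _ _).trans ?_
      filter_upwards [ih] with x hx
      rw [Pi.add_apply, hx, Finset.sum_cons]

lemma lp_hasSum_ae_eq {ι : Type*} [Countable ι]
    {u : ι → Lp E p μ} {S : Lp E p μ} (hS : HasSum u S)
    {φ : α → E} (hφ : ∀ᵐ x ∂μ, HasSum (fun i => (u i : α → E) x) (φ x)) :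
    (S : α → E) =ᵐ[μ] φ := by
  classical
  cases isEmpty_or_nonempty ι with
  | inl hempty =>
      have hu : u = fun _ => 0 := funext fun i => isEmptyElim i
      have hS0 : S = 0 := hS.unique (by rw [hu]; exact hasSum_zero)
      have hφ0 : φ =ᵐ[μ] 0 := by
        filter_upwards [hφ] with x hx
        have h0 : HasSum (fun i : ι => ((u i : α → E) x)) 0 := by
          have he : (fun i : ι => ((u i : α → E) x)) = fun _ => 0 :=
            funext fun i => isEmptyElim i
          rw [he]; exact hasSum_zero
        exact hx.unique h0
      subst hS0
      exact (Lp.coeFn_zero E p μ).trans hφ0.symm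
  | inr hne =>
      obtain ⟨e, he⟩ := exists_surjective_nat ι
      set F : ℕ → Finset ι := fun k => (Finset.range (k+1)).image e with hF
      have hmono : Monotone F := by
        intro a c hac
        exact Finset.image_subset_image (Finset.range_subset_range.2 (Nat.succ_le_succ hac))
      have hexh : ∀ i, ∃ k, i ∈ F k := by
        intro i; obtain ⟨m, rfl⟩ := he i
        exact ⟨m, Finset.mem_image_of_mem _ (Finset.mem_range.2 (by omega))⟩
      have hFt : Tendsto F atTop atTop := tendsto_atTop_finset_of_monotone hmono hexh
      have hS' : Tendsto (fun t : Finset ι => ∑ i ∈ t, u i) atTop (𝓝 S) := hS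
      have htend : Tendsto (fun k => ∑ i ∈ F k, u i) atTop (𝓝 S) := hS'.comp hFt
      have hm : TendstoInMeasure μ (fun k => ((∑ i ∈ F k, u i : Lp E p μ) : α → E)) atTop
          (S : α → E) := tendstoInMeasure_of_tendsto_Lp htend
      obtain ⟨ns, hns, hae⟩ := hm.exists_seq_tendsto_ae
      have hcoe : ∀ᵐ x ∂μ, ∀ k,
          ((∑ i ∈ F k, u i : Lp E p μ) : α → E) x = ∑ i ∈ F k, (u i : α → E) x := by
        rw [ae_all_iff]; exact fun k => Lp.coeFn_finset_sum (F k) u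
      filter_upwards [hae, hφ, hcoe] with x h1 h2 h3
      have h1' : Tendsto (fun i => ∑ j ∈ F (ns i), (u j : α → E) x) atTop
          (𝓝 ((S : α → E) x)) := h1.congr fun i => h3 (ns i)
      have h2a : Tendsto (fun t : Finset ι => ∑ i ∈ t, (u i : α → E) x) atTop (𝓝 (φ x)) := h2
      have h2' : Tendsto (fun i => ∑ j ∈ F (ns i), (u j : α → E) x) atTop (𝓝 (φ x)) :=
        h2a.comp (hFt.comp hns.tendsto_atTop)
      exact tendsto_nhds_unique h1' h2'

end lpsum

set_option maxHeartbeats 1000000 in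
/-- if `σ : 𝕋ⁿ × ℤⁿ → L(H)` satisfies
`Σ_ξ Σ_α ‖σ(·,ξ)e_α‖_{L^{p₂}(𝕋ⁿ,H)}^s < ∞` for an orthonormal basis `{e_α}` of `H`,
then the periodic pseudo-differential operator `Af(x) = Σ_ξ e^{2πi x·ξ} σ(x,ξ) f̂(ξ)`
extends to an `s`-nuclear operator from `L^{p₁}(𝕋ⁿ,H)` to `L^{p₂}(𝕋ⁿ,H)`. -/
theorem pseudodiff_extends_sNuclear {n : ℕ} {H : Type*} [NormedAddCommGroup H]
    [InnerProductSpace ℂ H] [CompleteSpace H]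
    {I : Type*} [Countable I] (b : HilbertBasis I ℂ H)
    (s : ℝ) (hs0 : 0 < s) (hs1 : s ≤ 1)
    (p₁ p₂ : ℝ≥0∞) [Fact (1 ≤ p₁)] (hp₁' : p₁ ≠ ⊤) [Fact (1 ≤ p₂)] (hp₂' : p₂ ≠ ⊤)
    (σ : Torus n → (Fin n → ℤ) → H →L[ℂ] H)
    (hmeas : ∀ (ξ : Fin n → ℤ) (v : H),
      AEStronglyMeasurable (fun x : Torus n => σ x ξ v) volume)
    (hfin : ∀ (ξ : Fin n → ℤ) (α : I),
      eLpNorm (fun x : Torus n => σ x ξ (b α)) p₂ volume < ⊤)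
    (hσ : Summable fun q : (Fin n → ℤ) × I =>
      ((eLpNorm (fun x : Torus n => σ x q.1 (b q.2)) p₂ volume).toReal) ^ s) :
    ∃ A : Lp H p₁ (volume : Measure (Torus n)) →L[ℂ] Lp H p₂ (volume : Measure (Torus n)),
      IsSNuclear s A ∧
      ∀ (f : Lp H p₁ (volume : Measure (Torus n))) (ξ₀ : Fin n → ℤ) (v : H),
        (f : Torus n → H) =ᵐ[volume] (fun x => tChar ξ₀ x • v) →
        (A f : Torus n → H) =ᵐ[volume] (fun x => tChar ξ₀ x • σ x ξ₀ v) := by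
  classical
  set ι := (Fin n → ℤ) × I with hι
  set c : ι → ℝ :=
    fun q => (eLpNorm (fun x : Torus n => σ x q.1 (b q.2)) p₂ volume).toReal with hcdef
  have hc0 : ∀ q, 0 ≤ c q := fun q => ENNReal.toReal_nonneg
  have hc : Summable c := summable_of_summable_rpow hs0 hs1 hc0 hσ
  -- the `h` family
  have hmemh : ∀ q : ι, MemLp (fun x : Torus n => tChar q.1 x • σ x q.1 (b q.2)) p₂ volume := by
    intro q
    refine ⟨((continuous_tChar q.1).aestronglyMeasurable).smul (hmeas q.1 (b q.2)), ?_⟩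
    have he : eLpNorm (fun x : Torus n => tChar q.1 x • σ x q.1 (b q.2)) p₂ volume
        = eLpNorm (fun x : Torus n => σ x q.1 (b q.2)) p₂ volume := by
      refine eLpNorm_congr_norm_ae ?_
      filter_upwards with x
      rw [norm_smul, norm_tChar, one_mul]
    rw [he]; exact hfin _ _
  set hfn : ι → Lp H p₂ (volume : Measure (Torus n)) :=
    fun q => (hmemh q).toLp (fun x : Torus n => tChar q.1 x • σ x q.1 (b q.2)) with hhfn
  have hnorm_h : ∀ q, ‖hfn q‖ = c q := by
    intro q
    rw [Lp.norm_toLp]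
    congr 1
    refine eLpNorm_congr_norm_ae ?_
    filter_upwards with x; rw [norm_smul, norm_tChar, one_mul]
  have hcoeFn_h : ∀ q : ι, (hfn q : Torus n → H) =ᵐ[volume]
      fun x => tChar q.1 x • σ x q.1 (b q.2) := fun q => (hmemh q).coeFn_toLp
  -- the `g` family
  have hb1 : ∀ α : I, ‖b α‖ = 1 := fun α => b.orthonormal.1 α
  have hbound : ∀ (q : ι) (f : Lp H p₁ (volume : Measure (Torus n))),
      ‖(inner ℂ (b q.2) (vFourierCoeff (f : Torus n → H) q.1) : ℂ)‖ ≤ 1 * ‖f‖ := by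
    intro q f
    refine (norm_inner_le_norm _ _).trans ?_
    rw [hb1, one_mul, one_mul, Lp.norm_def]
    exact norm_vFourierCoeff_le hp₁' (Lp.memLp f) q.1
  set glin : ι → (Lp H p₁ (volume : Measure (Torus n)) →ₗ[ℂ] ℂ) := fun q =>
    { toFun := fun f => (inner ℂ (b q.2) (vFourierCoeff (f : Torus n → H) q.1) : ℂ)
      map_add' := by
        intro f f'
        have h1 : vFourierCoeff ((f + f' : Lp H p₁ (volume : Measure (Torus n))) :
              Torus n → H) q.1
            = vFourierCoeff (f : Torus n → H) q.1 + vFourierCoeff (f' : Torus n → H) q.1 := by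
          rw [vFourierCoeff_congr (Lp.coeFn_add f f') q.1]
          exact vFourierCoeff_add ((Lp.memLp f).integrable Fact.out)
            ((Lp.memLp f').integrable Fact.out) q.1
        rw [h1, inner_add_right]
      map_smul' := by
        intro m f
        have h1 : vFourierCoeff ((m • f : Lp H p₁ (volume : Measure (Torus n))) :
              Torus n → H) q.1
            = m • vFourierCoeff (f : Torus n → H) q.1 := by
          rw [vFourierCoeff_congr (Lp.coeFn_smul m f) q.1, vFourierCoeff_smul]
        rw [RingHom.id_apply, h1, inner_smul_right]
        rfl } with hglin
  set g : ι → (Lp H p₁ (volume : Measure (Torus n)) →L[ℂ] ℂ) :=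
    fun q => LinearMap.mkContinuous (glin q) 1 (hbound q) with hg
  have hg_le : ∀ q, ‖g q‖ ≤ 1 := fun q => LinearMap.mkContinuous_norm_le _ zero_le_one _
  have hg_apply : ∀ (q : ι) (f : Lp H p₁ (volume : Measure (Torus n))),
      g q f = (inner ℂ (b q.2) (vFourierCoeff (f : Torus n → H) q.1) : ℂ) := fun q f => rfl
  -- summability
  have hptbound : ∀ (f : Lp H p₁ (volume : Measure (Torus n))) (q : ι),
      ‖g q f • hfn q‖ ≤ ‖f‖ * c q := by
    intro f q
    rw [norm_smul, hnorm_h]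
    have h2 : ‖g q f‖ ≤ ‖f‖ := by
      refine ((g q).le_opNorm f).trans ?_
      calc ‖g q‖ * ‖f‖ ≤ 1 * ‖f‖ := by gcongr; exact hg_le q
      _ = ‖f‖ := one_mul _
    exact mul_le_mul_of_nonneg_right h2 (hc0 q)
  have hsum : ∀ f : Lp H p₁ (volume : Measure (Torus n)),
      Summable (fun q : ι => g q f • hfn q) := by
    intro f
    exact Summable.of_norm_bounded (hc.mul_left _) (hptbound f)
  -- the operator
  set Alin : Lp H p₁ (volume : Measure (Torus n)) →ₗ[ℂ] Lp H p₂ (volume : Measure (Torus n)) :=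
    { toFun := fun f => ∑' q : ι, g q f • hfn q
      map_add' := by
        intro f f'
        have hfe : (fun q : ι => g q (f + f') • hfn q)
            = fun q : ι => g q f • hfn q + g q f' • hfn q := by
          funext q
          rw [map_add, add_smul]
        rw [hfe]
        exact ((hsum f).hasSum.add (hsum f').hasSum).tsum_eq
      map_smul' := by
        intro m f
        have hfe : (fun q : ι => g q (m • f) • hfn q)
            = fun q : ι => m • (g q f • hfn q) := by
          funext q
          rw [(g q).map_smul, smul_eq_mul, mul_smul]
        rw [RingHom.id_apply, hfe]
        exact ((hsum f).hasSum.const_smul m).tsum_eq } with hAlin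
  have hAbound : ∀ f : Lp H p₁ (volume : Measure (Torus n)),
      ‖Alin f‖ ≤ (∑' q : ι, c q) * ‖f‖ := by
    intro f
    have hns : Summable fun q : ι => ‖g q f • hfn q‖ :=
      Summable.of_nonneg_of_le (fun q => norm_nonneg _) (hptbound f) (hc.mul_left _)
    refine (norm_tsum_le_tsum_norm hns).trans ?_
    calc ∑' q : ι, ‖g q f • hfn q‖ ≤ ∑' q : ι, ‖f‖ * c q :=
          Summable.tsum_le_tsum (hptbound f) hns (hc.mul_left _)
    _ = ‖f‖ * ∑' q : ι, c q := tsum_mul_left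
    _ = (∑' q : ι, c q) * ‖f‖ := mul_comm _ _
  set A := Alin.mkContinuous _ hAbound with hA
  have hA_apply : ∀ f, A f = ∑' q : ι, g q f • hfn q := fun f => rfl
  have hA_hasSum : ∀ f, HasSum (fun q : ι => g q f • hfn q) (A f) := by
    intro f
    rw [hA_apply]
    exact (hsum f).hasSum
  obtain ⟨eI, heI⟩ : ∃ eI : I → ℕ, Function.Injective eI := Countable.exists_injective_nat I
  set eqv : ι ≃ ((Fin n → ℤ) × Set.range eI) :=
    Equiv.prodCongr (Equiv.refl _) (Equiv.ofInjective eI heI) with heqv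
  refine ⟨A, ⟨(Fin n → ℤ) × Set.range eI, inferInstance, g ∘ eqv.symm, hfn ∘ eqv.symm,
    ?_, fun f => (eqv.symm.hasSum_iff).mpr (hA_hasSum f)⟩, ?_⟩
  · refine (eqv.symm.summable_iff
      (f := fun q : ι => ‖g q‖ ^ s * ‖hfn q‖ ^ s)).mpr ?_
    refine Summable.of_nonneg_of_le
      (fun q => mul_nonneg (Real.rpow_nonneg (norm_nonneg (g q)) s)
        (Real.rpow_nonneg (norm_nonneg (hfn q)) s)) (fun q => ?_) hσ
    have h1 : ‖g q‖ ^ s ≤ 1 := Real.rpow_le_one (norm_nonneg (g q)) (hg_le q) hs0.le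
    have h2 : ‖hfn q‖ ^ s = c q ^ s := by rw [hnorm_h]
    rw [h2]
    exact mul_le_of_le_one_left (Real.rpow_nonneg (hc0 q) s) h1
  · intro f ξ₀ v hf
    have hgf : ∀ q : ι, g q f = if q.1 = ξ₀ then (inner ℂ (b q.2) v : ℂ) else 0 := by
      intro q
      rw [hg_apply, vFourierCoeff_congr hf q.1, vFourierCoeff_char]
      split_ifs with h
      · rfl
      · exact inner_zero_right _
    refine lp_hasSum_ae_eq (hA_hasSum f) ?_
    have haeh : ∀ᵐ x ∂(volume : Measure (Torus n)), ∀ q : ι,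
        ((g q f • hfn q : Lp H p₂ (volume : Measure (Torus n))) : Torus n → H) x
          = g q f • (tChar q.1 x • σ x q.1 (b q.2)) := by
      rw [ae_all_iff]
      intro q
      filter_upwards [Lp.coeFn_smul (g q f) (hfn q), hcoeFn_h q] with x h1 h2
      rw [h1, Pi.smul_apply, h2]
    filter_upwards [haeh] with x hx
    have hgoal : HasSum (fun q : ι => g q f • (tChar q.1 x • σ x q.1 (b q.2)))
        (tChar ξ₀ x • σ x ξ₀ v) := by
      have hinj : Function.Injective (fun α : I => ((ξ₀, α) : ι)) := by
        intro a a' ha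
        exact congrArg Prod.snd ha
      have hvan : ∀ q : ι, q ∉ Set.range (fun α : I => ((ξ₀, α) : ι)) →
          g q f • (tChar q.1 x • σ x q.1 (b q.2)) = 0 := by
        intro q hq
        have hne : q.1 ≠ ξ₀ := by
          intro h
          exact hq ⟨q.2, by rw [← h]⟩
        rw [hgf, if_neg hne, zero_smul]
      refine (Function.Injective.hasSum_iff hinj hvan).mp ?_
      have hrepr : HasSum (fun α : I => b.repr v α • b α) v := b.hasSum_repr v
      have hmap : HasSum (fun α : I => b.repr v α • σ x ξ₀ (b α)) (σ x ξ₀ v) := by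
        have := hrepr.mapL (σ x ξ₀)
        refine this.congr_fun fun α => ?_
        exact ((σ x ξ₀).map_smul (b.repr v α) (b α)).symm
      have hfinal := hmap.const_smul (tChar ξ₀ x)
      refine hfinal.congr_fun fun α => ?_
      show g ((ξ₀, α) : ι) f • (tChar ξ₀ x • σ x ξ₀ (b α))
          = tChar ξ₀ x • (b.repr v α • σ x ξ₀ (b α))
      rw [hgf, if_pos rfl, b.repr_apply_apply, smul_comm]
    exact hgoal.congr_fun fun q => hx q

end
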